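/- Let A ∈ ℝ^{m×n} have full row rank, J = I − Aᵀ(AAᵀ)⁻¹A, and G ∈ Sym(n,ℝ). Suppose X ⪰ 0 with AX = 0 satisfies JGJ ⪰ 0 and X(JGJ) = 0. Define V := (AAᵀ)⁻¹A·G·(I − ½Aᵀ(AAᵀ)⁻¹A). Then S := G − AᵀV − VᵀA equals JGJ; consequently S ⪰ 0 and ⟨X, S⟩ = 0. -/

import Mathlib

open Matrix

/-- The orthogonal projector onto the null space of `A`. -/
noncomputable def projMat {m n : ℕ} (A : Matrix (Fin m) (Fin n) ℝ) : Matrix (Fin n) (Fin n) ℝ :=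
  1 - Aᵀ * (A * Aᵀ)⁻¹ * A

theorem stmt_7 {m n : ℕ} (A : Matrix (Fin m) (Fin n) ℝ) (hA : A.rank = m)
    (G : Matrix (Fin n) (Fin n) ℝ) (hG : G.IsSymm)
    (X : Matrix (Fin n) (Fin n) ℝ) (hX : X.PosSemidef) (hAX : A * X = 0)
    (hhatS : (projMat A * G * projMat A).PosSemidef)
    (hXhatS : X * (projMat A * G * projMat A) = 0) :
    let V : Matrix (Fin m) (Fin n) ℝ :=
      (A * Aᵀ)⁻¹ * A * G * (1 - (1/2 : ℝ) • (Aᵀ * (A * Aᵀ)⁻¹ * A))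
    G - Aᵀ * V - Vᵀ * A = projMat A * G * projMat A ∧
      (G - Aᵀ * V - Vᵀ * A).PosSemidef ∧
      Matrix.trace (Xᵀ * (G - Aᵀ * V - Vᵀ * A)) = 0 := by
  intro V
  set P : Matrix (Fin n) (Fin n) ℝ := Aᵀ * (A * Aᵀ)⁻¹ * A with hP
  set Q : Matrix (Fin n) (Fin n) ℝ := (1/2 : ℝ) • P with hQ
  have hQQ : Q + Q = P := by
    rw [hQ, ← add_smul]; norm_num
  have hinvsymm : ((A * Aᵀ)⁻¹)ᵀ = (A * Aᵀ)⁻¹ := by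
    rw [Matrix.transpose_nonsing_inv]
    congr 1
    rw [Matrix.transpose_mul, Matrix.transpose_transpose]
  have hPsymm : Pᵀ = P := by
    rw [hP, Matrix.transpose_mul, Matrix.transpose_mul, Matrix.transpose_transpose,
      hinvsymm, Matrix.mul_assoc]
  have hAtV : Aᵀ * V = P * G * (1 - Q) := by
    show Aᵀ * ((A * Aᵀ)⁻¹ * A * G * (1 - Q)) = _
    rw [hP]; simp only [Matrix.mul_assoc]
  have hQsymm : Qᵀ = Q := by rw [hQ, Matrix.transpose_smul, hPsymm]
  have hVtA : Vᵀ * A = (1 - Q) * G * P := by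
    show ((A * Aᵀ)⁻¹ * A * G * (1 - Q))ᵀ * A = _
    rw [Matrix.transpose_mul, Matrix.transpose_mul, Matrix.transpose_mul, hinvsymm,
      Matrix.transpose_sub, hQsymm, Matrix.transpose_one, hG.eq, hP]
    simp only [Matrix.mul_assoc]
  have key : G - Aᵀ * V - Vᵀ * A = projMat A * G * projMat A := by
    rw [hAtV, hVtA, projMat, ← hP]
    have : Q * G * P + P * G * Q = P * G * P := by
      rw [hQ, Matrix.smul_mul, Matrix.smul_mul, Matrix.mul_smul, ← add_smul]; norm_num
    calc G - P * G * (1 - Q) - (1 - Q) * G * P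
        = G - P * G - G * P + (Q * G * P + P * G * Q) := by
          noncomm_ring
      _ = G - P * G - G * P + P * G * P := by rw [this]
      _ = (1 - P) * G * (1 - P) := by noncomm_ring
  refine ⟨key, key ▸ hhatS, ?_⟩
  have hXs : Xᵀ = X := by
    have := hX.isHermitian
    rwa [Matrix.IsHermitian, Matrix.conjTranspose_eq_transpose_of_trivial] at this
  rw [key, hXs, hXhatS, Matrix.trace_zero]
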